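/- With β(u,v) = ((v-3u)(324u²+15u²v-378uv-4uv²+243v+72v²)/((v-27)(4u³+27v-18uv-u²v+4v²)), -4(v-3u)³/(4u³+27v-18uv-u²v+4v²)), the map β is an involution of the rational function field: β(β(u,v)) = (u,v) as an identity of rational functions in u and v. -/

import Mathlib

/-- The field `ℚ(u,v)` of rational functions in two variables. -/
abbrev RatFuncTwo : Type := FractionRing (MvPolynomial (Fin 2) ℚ)

/-- The map `β(u,v)`. -/
noncomputable def betaMap (p : RatFuncTwo × RatFuncTwo) : RatFuncTwo × RatFuncTwo :=
  ((p.2 - 3 * p.1) *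
      (324 * p.1 ^ 2 + 15 * p.1 ^ 2 * p.2 - 378 * p.1 * p.2 - 4 * p.1 * p.2 ^ 2 +
        243 * p.2 + 72 * p.2 ^ 2) /
      ((p.2 - 27) *
        (4 * p.1 ^ 3 + 27 * p.2 - 18 * p.1 * p.2 - p.1 ^ 2 * p.2 + 4 * p.2 ^ 2)),
    -4 * (p.2 - 3 * p.1) ^ 3 /
      (4 * p.1 ^ 3 + 27 * p.2 - 18 * p.1 * p.2 - p.1 ^ 2 * p.2 + 4 * p.2 ^ 2))

open MvPolynomial in
noncomputable def Dpoly : MvPolynomial (Fin 2) ℚ :=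
  4 * X 0 ^ 3 + 27 * X 1 - 18 * X 0 * X 1 - X 0 ^ 2 * X 1 + 4 * X 1 ^ 2

open MvPolynomial in
noncomputable def v27poly : MvPolynomial (Fin 2) ℚ := X 1 - 27

open MvPolynomial in
noncomputable def apoly : MvPolynomial (Fin 2) ℚ :=
  (X 1 - 3 * X 0) * (324 * X 0 ^ 2 + 15 * X 0 ^ 2 * X 1 - 378 * X 0 * X 1
    - 4 * X 0 * X 1 ^ 2 + 243 * X 1 + 72 * X 1 ^ 2)

open MvPolynomial in
noncomputable def bpoly : MvPolynomial (Fin 2) ℚ := -4 * (X 1 - 3 * X 0) ^ 3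

noncomputable def N2poly : MvPolynomial (Fin 2) ℚ := bpoly - 27 * Dpoly

noncomputable def Npoly : MvPolynomial (Fin 2) ℚ :=
  4 * apoly ^ 3 + 27 * bpoly * v27poly ^ 3 * Dpoly ^ 2
    - 18 * apoly * bpoly * v27poly ^ 2 * Dpoly
    - apoly ^ 2 * bpoly * v27poly + 4 * bpoly ^ 2 * v27poly ^ 3 * Dpoly

set_option maxHeartbeats 4000000 in
lemma eval_ne_imp_ne (q : MvPolynomial (Fin 2) ℚ)
    (h : MvPolynomial.eval (fun _ => (1 : ℚ)) q ≠ 0) :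
    algebraMap (MvPolynomial (Fin 2) ℚ) RatFuncTwo q ≠ 0 := by
  intro h0
  have : q = 0 := IsFractionRing.injective (MvPolynomial (Fin 2) ℚ) RatFuncTwo (by simpa using h0)
  rw [this] at h
  simp at h

set_option maxHeartbeats 12000000 in
theorem beta_involution :
    betaMap (betaMap
        (algebraMap (MvPolynomial (Fin 2) ℚ) RatFuncTwo (MvPolynomial.X 0),
         algebraMap (MvPolynomial (Fin 2) ℚ) RatFuncTwo (MvPolynomial.X 1))) =
      (algebraMap (MvPolynomial (Fin 2) ℚ) RatFuncTwo (MvPolynomial.X 0),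
       algebraMap (MvPolynomial (Fin 2) ℚ) RatFuncTwo (MvPolynomial.X 1)) := by
  set φ := algebraMap (MvPolynomial (Fin 2) ℚ) RatFuncTwo with hφ
  set U := φ (MvPolynomial.X 0) with hU
  set V := φ (MvPolynomial.X 1) with hV
  have hDne : φ Dpoly ≠ 0 := eval_ne_imp_ne _ (by norm_num [Dpoly])
  have hv27ne : φ v27poly ≠ 0 := eval_ne_imp_ne _ (by norm_num [v27poly])
  have hN2ne : φ N2poly ≠ 0 := eval_ne_imp_ne _ (by norm_num [N2poly, bpoly, Dpoly])
  have hNne : φ Npoly ≠ 0 := eval_ne_imp_ne _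
    (by norm_num [Npoly, apoly, bpoly, v27poly, Dpoly])
  have hstep1 : betaMap (U, V) = (φ apoly / (φ v27poly * φ Dpoly), φ bpoly / φ Dpoly) := by
    simp only [betaMap, apoly, bpoly, v27poly, Dpoly, map_mul, map_add, map_sub,
      map_pow, map_neg, map_ofNat]
    rfl
  rw [hstep1]
  set A := φ apoly / (φ v27poly * φ Dpoly) with hA
  set B := φ bpoly / φ Dpoly with hB
  have ha' : A * (φ v27poly * φ Dpoly) = φ apoly := by
    rw [hA]; exact div_mul_cancel₀ _ (mul_ne_zero hv27ne hDne)
  have hb' : B * φ Dpoly = φ bpoly := by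
    rw [hB]; exact div_mul_cancel₀ _ hDne
  have hNeq : φ Npoly = (4 * A ^ 3 + 27 * B - 18 * A * B - A ^ 2 * B + 4 * B ^ 2)
      * (φ v27poly ^ 3 * φ Dpoly ^ 3) := by
    simp only [Npoly, map_mul, map_add, map_sub, map_pow, map_ofNat]
    rw [← ha', ← hb']
    ring
  have hN2eq : φ N2poly = (B - 27) * φ Dpoly := by
    simp only [N2poly, map_mul, map_sub, map_ofNat]
    rw [← hb']
    ring
  have hΔne : 4 * A ^ 3 + 27 * B - 18 * A * B - A ^ 2 * B + 4 * B ^ 2 ≠ 0 := by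
    intro h
    exact hNne (by rw [hNeq, h, zero_mul])
  have hB27ne : B - 27 ≠ 0 := by
    intro h
    exact hN2ne (by rw [hN2eq, h, zero_mul])
  have key1 : (φ bpoly * φ v27poly - 3 * φ apoly) *
      (324 * φ apoly ^ 2 * φ Dpoly + 15 * φ apoly ^ 2 * φ bpoly
        - 378 * φ apoly * φ bpoly * (φ v27poly * φ Dpoly)
        - 4 * φ apoly * φ bpoly ^ 2 * φ v27poly
        + 243 * φ bpoly * φ v27poly ^ 2 * φ Dpoly ^ 2
        + 72 * φ bpoly ^ 2 * φ v27poly ^ 2 * φ Dpoly)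
      = U * (φ N2poly * φ Npoly) := by
    simp only [apoly, bpoly, v27poly, Dpoly, N2poly, Npoly, map_mul, map_add, map_sub,
      map_pow, map_neg, map_ofNat]
    ring
  have key2 : -4 * (φ bpoly * φ v27poly - 3 * φ apoly) ^ 3 = V * φ Npoly := by
    simp only [apoly, bpoly, v27poly, Dpoly, Npoly, map_mul, map_add, map_sub,
      map_pow, map_neg, map_ofNat]
    ring
  simp only [betaMap, Prod.mk.injEq]
  constructor
  · rw [div_eq_iff (mul_ne_zero hB27ne hΔne)]
    apply mul_right_cancel₀ (mul_ne_zero (pow_ne_zero 3 hv27ne) (pow_ne_zero 4 hDne))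
    calc ((B - 3 * A) * (324 * A ^ 2 + 15 * A ^ 2 * B - 378 * A * B - 4 * A * B ^ 2
            + 243 * B + 72 * B ^ 2)) * (φ v27poly ^ 3 * φ Dpoly ^ 4)
        = ((B * φ Dpoly) * φ v27poly - 3 * (A * (φ v27poly * φ Dpoly))) *
            (324 * (A * (φ v27poly * φ Dpoly)) ^ 2 * φ Dpoly
              + 15 * (A * (φ v27poly * φ Dpoly)) ^ 2 * (B * φ Dpoly)
              - 378 * (A * (φ v27poly * φ Dpoly)) * (B * φ Dpoly) * (φ v27poly * φ Dpoly)
              - 4 * (A * (φ v27poly * φ Dpoly)) * (B * φ Dpoly) ^ 2 * φ v27poly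
              + 243 * (B * φ Dpoly) * φ v27poly ^ 2 * φ Dpoly ^ 2
              + 72 * (B * φ Dpoly) ^ 2 * φ v27poly ^ 2 * φ Dpoly) := by ring
      _ = (φ bpoly * φ v27poly - 3 * φ apoly) *
            (324 * φ apoly ^ 2 * φ Dpoly + 15 * φ apoly ^ 2 * φ bpoly
              - 378 * φ apoly * φ bpoly * (φ v27poly * φ Dpoly)
              - 4 * φ apoly * φ bpoly ^ 2 * φ v27poly
              + 243 * φ bpoly * φ v27poly ^ 2 * φ Dpoly ^ 2
              + 72 * φ bpoly ^ 2 * φ v27poly ^ 2 * φ Dpoly) := by rw [ha', hb']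
      _ = U * (φ N2poly * φ Npoly) := key1
      _ = U * (((B - 27) * φ Dpoly) *
            ((4 * A ^ 3 + 27 * B - 18 * A * B - A ^ 2 * B + 4 * B ^ 2)
              * (φ v27poly ^ 3 * φ Dpoly ^ 3))) := by rw [hN2eq, hNeq]
      _ = (U * ((B - 27) * (4 * A ^ 3 + 27 * B - 18 * A * B - A ^ 2 * B + 4 * B ^ 2)))
            * (φ v27poly ^ 3 * φ Dpoly ^ 4) := by ring
  · rw [div_eq_iff hΔne]
    apply mul_right_cancel₀ (mul_ne_zero (pow_ne_zero 3 hv27ne) (pow_ne_zero 3 hDne))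
    calc (-4 * (B - 3 * A) ^ 3) * (φ v27poly ^ 3 * φ Dpoly ^ 3)
        = -4 * ((B * φ Dpoly) * φ v27poly - 3 * (A * (φ v27poly * φ Dpoly))) ^ 3 := by ring
      _ = -4 * (φ bpoly * φ v27poly - 3 * φ apoly) ^ 3 := by rw [ha', hb']
      _ = V * φ Npoly := key2
      _ = V * ((4 * A ^ 3 + 27 * B - 18 * A * B - A ^ 2 * B + 4 * B ^ 2)
            * (φ v27poly ^ 3 * φ Dpoly ^ 3)) := by rw [hNeq]
      _ = (V * (4 * A ^ 3 + 27 * B - 18 * A * B - A ^ 2 * B + 4 * B ^ 2))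
            * (φ v27poly ^ 3 * φ Dpoly ^ 3) := by ring
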